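/- Let X be a separable Banach space and Y a WCG Banach space (there is a weakly compact set G ⊆ Y with Y = closed linear span of G). Then the projective tensor product X ⊗̂_π Y is WCG. More precisely, if (xₙ) is dense in X and K ⊆ Y is weakly compact with Y = closed span of K, then each set {xₙ} ⊗ K is weakly compact in X ⊗̂_π Y and the union of these sets has dense linear span. -/

import Mathlib

open TensorProduct UniformSpace NormedSpace
open scoped ENNReal

section ProjectiveTensor

variable (X Y : Type*) [NormedAddCommGroup X] [NormedSpace ℝ X]
  [NormedAddCommGroup Y] [NormedSpace ℝ Y]

/-- A continuous bilinear form, viewed as a plain bilinear map. -/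
noncomputable def bilinL :
    (X →L[ℝ] Y →L[ℝ] ℝ) →ₗ[ℝ] (X →ₗ[ℝ] Y →ₗ[ℝ] ℝ) :=
  (LinearMap.llcomp ℝ X (Y →L[ℝ] ℝ) (Y →ₗ[ℝ] ℝ) (ContinuousLinearMap.coeLM ℝ)) ∘ₗ
    ContinuousLinearMap.coeLM ℝ

/-- The linear functional on `X ⊗ Y` induced by a continuous bilinear form. -/
noncomputable def tensorEval :
    (X →L[ℝ] Y →L[ℝ] ℝ) →ₗ[ℝ] (X ⊗[ℝ] Y →ₗ[ℝ] ℝ) :=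
  (TensorProduct.lift.equiv (RingHom.id ℝ) X Y ℝ).toLinearMap ∘ₗ bilinL X Y

lemma tensorEval_exists_bound (u : X ⊗[ℝ] Y) :
    ∃ C : ℝ, 0 ≤ C ∧ ∀ S : X →L[ℝ] Y →L[ℝ] ℝ, |tensorEval X Y S u| ≤ C * ‖S‖ := by
  induction u using TensorProduct.induction_on with
  | zero => exact ⟨0, le_refl _, fun S => by simp⟩
  | tmul x y =>
      refine ⟨‖x‖ * ‖y‖, mul_nonneg (norm_nonneg x) (norm_nonneg y), fun S => ?_⟩
      have h : tensorEval X Y S (x ⊗ₜ[ℝ] y) = S x y := rfl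
      rw [h]
      calc |S x y| = ‖S x y‖ := rfl
        _ ≤ ‖S x‖ * ‖y‖ := (S x).le_opNorm y
        _ ≤ (‖S‖ * ‖x‖) * ‖y‖ := by
            have := S.le_opNorm x
            gcongr
        _ = ‖x‖ * ‖y‖ * ‖S‖ := by ring
  | add u v hu hv =>
      obtain ⟨C1, hC1, h1⟩ := hu
      obtain ⟨C2, hC2, h2⟩ := hv
      refine ⟨C1 + C2, add_nonneg hC1 hC2, fun S => ?_⟩
      have h : tensorEval X Y S (u + v) = tensorEval X Y S u + tensorEval X Y S v :=
        map_add _ _ _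
      rw [h, add_mul]
      exact (abs_add_le _ _).trans (add_le_add (h1 S) (h2 S))

/-- The canonical embedding of `X ⊗ Y` into the space of bounded families indexed by the
unit ball of the space of continuous bilinear forms on `X × Y`; the norm it induces on
`X ⊗ Y` is exactly the projective tensor norm
`‖u‖_π = sup {|S(u)| : S a continuous bilinear form, ‖S‖ ≤ 1}`. -/
noncomputable def toBilinBall :
    (X ⊗[ℝ] Y) →ₗ[ℝ]
      lp (fun _ : {S : X →L[ℝ] Y →L[ℝ] ℝ // ‖S‖ ≤ 1} => ℝ) ∞ where
  toFun u := ⟨fun S => tensorEval X Y S.1 u, by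
    apply memℓp_infty
    obtain ⟨C, hC0, hC⟩ := tensorEval_exists_bound X Y u
    refine ⟨C, ?_⟩
    rintro r ⟨S, rfl⟩
    calc ‖tensorEval X Y S.1 u‖ = |tensorEval X Y S.1 u| := rfl
      _ ≤ C * ‖S.1‖ := hC S.1
      _ ≤ C := mul_le_of_le_one_right hC0 S.2⟩
  map_add' u v := Subtype.ext (funext fun S => map_add (tensorEval X Y S.1) u v)
  map_smul' c u := Subtype.ext (funext fun S => map_smul (tensorEval X Y S.1) c u)

/-- `X ⊗ Y` equipped with the projective tensor seminorm. -/
noncomputable instance : SeminormedAddCommGroup (X ⊗[ℝ] Y) :=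
  SeminormedAddCommGroup.induced _ _ (toBilinBall X Y)

noncomputable instance : NormedSpace ℝ (X ⊗[ℝ] Y) :=
  NormedSpace.induced ℝ _ _ (toBilinBall X Y)

end ProjectiveTensor

section Aux

open Filter Topology Bornology

variable {X Y : Type*} [NormedAddCommGroup X] [NormedSpace ℝ X]
  [NormedAddCommGroup Y] [NormedSpace ℝ Y]

lemma projNorm_tmul_le (x : X) (y : Y) : ‖(x ⊗ₜ[ℝ] y : X ⊗[ℝ] Y)‖ ≤ ‖x‖ * ‖y‖ := by
  show ‖toBilinBall X Y (x ⊗ₜ[ℝ] y)‖ ≤ ‖x‖ * ‖y‖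
  refine lp.norm_le_of_forall_le (mul_nonneg (norm_nonneg x) (norm_nonneg y)) ?_
  rintro ⟨S, hS⟩
  show ‖tensorEval X Y S (x ⊗ₜ[ℝ] y)‖ ≤ ‖x‖ * ‖y‖
  have h : tensorEval X Y S (x ⊗ₜ[ℝ] y) = S x y := rfl
  rw [h]
  calc ‖S x y‖ ≤ ‖S x‖ * ‖y‖ := (S x).le_opNorm y
    _ ≤ (‖S‖ * ‖x‖) * ‖y‖ := by have := S.le_opNorm x; gcongr
    _ ≤ (1 * ‖x‖) * ‖y‖ := by gcongr
    _ = ‖x‖ * ‖y‖ := by ring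

/-- `y ↦ x ⊗ y` as a continuous linear map. -/
noncomputable def tmulRightL (x : X) : Y →L[ℝ] (X ⊗[ℝ] Y) :=
  LinearMap.mkContinuous (TensorProduct.mk ℝ X Y x) ‖x‖ fun y => projNorm_tmul_le x y

/-- `x ↦ x ⊗ y` as a continuous linear map. -/
noncomputable def tmulLeftL (y : Y) : X →L[ℝ] (X ⊗[ℝ] Y) :=
  LinearMap.mkContinuous ((TensorProduct.mk ℝ X Y).flip y) ‖y‖ fun x => by
    rw [mul_comm]; exact projNorm_tmul_le x y

@[simp] lemma tmulRightL_apply (x : X) (y : Y) : tmulRightL x y = x ⊗ₜ[ℝ] y := rfl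
@[simp] lemma tmulLeftL_apply (x : X) (y : Y) : tmulLeftL y x = x ⊗ₜ[ℝ] y := rfl

lemma tmulRightL_norm_apply_le (x : X) (y : Y) : ‖tmulRightL x y‖ ≤ ‖x‖ * ‖y‖ :=
  projNorm_tmul_le x y

/-- Weakly compact sets in a normed space are norm-bounded. -/
lemma exists_norm_le_of_weakSpace_compact [CompleteSpace Y] (K : Set Y)
    (hK : IsCompact (toWeakSpace ℝ Y '' K)) :
    ∃ M : ℝ, ∀ k ∈ K, ‖k‖ ≤ M := by
  have hpt : ∀ f : Y →L[ℝ] ℝ,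
      ∃ C, ∀ k : K, ‖(inclusionInDoubleDual ℝ Y (k : Y)) f‖ ≤ C := by
    intro f
    have hc : Continuous fun w : WeakSpace ℝ Y => f ((toWeakSpace ℝ Y).symm w) :=
      WeakBilin.eval_continuous ((topDualPairing ℝ Y).flip) f
    obtain ⟨C, hC⟩ := (hK.image hc).isBounded.exists_norm_le
    refine ⟨C, fun k => ?_⟩
    exact hC _ ⟨toWeakSpace ℝ Y (k : Y),
      Set.mem_image_of_mem _ k.2, rfl⟩
  obtain ⟨C', hC'⟩ := banach_steinhaus hpt
  refine ⟨C', fun k hk => ?_⟩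
  have h1 := hC' ⟨k, hk⟩
  have h2 : ‖inclusionInDoubleDual ℝ Y k‖ = ‖k‖ :=
    (inclusionInDoubleDualLi ℝ (E := Y)).norm_map k
  rwa [h2] at h1

/-- A sufficient condition for convergence in the weak topology. -/
lemma tendsto_weakSpace {α E : Type*} [NormedAddCommGroup E] [NormedSpace ℝ E]
    {l : Filter α} {f : α → WeakSpace ℝ E} {z : WeakSpace ℝ E}
    (h : ∀ φ : E →L[ℝ] ℝ, Tendsto (fun a => φ ((toWeakSpace ℝ E).symm (f a))) l
      (𝓝 (φ ((toWeakSpace ℝ E).symm z)))) : Tendsto f l (𝓝 z) := by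
  have hinj : Function.Injective ⇑(topDualPairing ℝ E).flip := by
    intro u v huv
    refine (NormedSpace.eq_iff_forall_dual_eq ℝ).mpr fun g => ?_
    exact DFunLike.congr_fun huv g
  exact (WeakBilin.tendsto_iff_forall_eval_tendsto _ hinj).mpr h

lemma toWeakSpace_symm_map {E F : Type*} [NormedAddCommGroup E] [NormedSpace ℝ E]
    [NormedAddCommGroup F] [NormedSpace ℝ F] (f : E →L[ℝ] F) (v : E) :
    (toWeakSpace ℝ F).symm (WeakSpace.map f (toWeakSpace ℝ E v)) = f v := rfl

end Aux
set_option maxHeartbeats 1000000 in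
/-- Let `X` be a separable Banach space and `Y` a WCG Banach space.
Then the projective tensor product `X ⊗̂_π Y` (realized as the completion of `X ⊗ Y`
under the projective norm) is WCG. More precisely, if `(xₙ)` is dense in `X` and `K ⊆ Y`
is weakly compact with `Y = closed span K`, then each set `{xₙ} ⊗ K` is weakly compact in
`X ⊗̂_π Y` and the union of these sets has dense linear span. -/
theorem projectiveTensorProduct_WCG_of_separable_of_WCG
    {X Y : Type*} [NormedAddCommGroup X] [NormedSpace ℝ X] [CompleteSpace X]
    [NormedAddCommGroup Y] [NormedSpace ℝ Y] [CompleteSpace Y]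
    [TopologicalSpace.SeparableSpace X]
    (x : ℕ → X) (hx : DenseRange x)
    (K : Set Y) (hK : IsCompact (toWeakSpace ℝ Y '' K))
    (hKgen : (Submodule.span ℝ K).topologicalClosure = ⊤) :
    (∀ n : ℕ, IsCompact (toWeakSpace ℝ (Completion (X ⊗[ℝ] Y)) ''
        ((fun y : Y => ((x n ⊗ₜ[ℝ] y : X ⊗[ℝ] Y) : Completion (X ⊗[ℝ] Y))) '' K))) ∧
    (Submodule.span ℝ
        (⋃ n : ℕ, (fun y : Y => ((x n ⊗ₜ[ℝ] y : X ⊗[ℝ] Y) : Completion (X ⊗[ℝ] Y))) '' K)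
      ).topologicalClosure = ⊤ ∧
    ∃ G : Set (Completion (X ⊗[ℝ] Y)),
      IsCompact (toWeakSpace ℝ (Completion (X ⊗[ℝ] Y)) '' G) ∧
      (Submodule.span ℝ G).topologicalClosure = ⊤ := by
  classical
  open Filter Topology in
  let T : ℕ → Y →L[ℝ] Completion (X ⊗[ℝ] Y) := fun n =>
    (Completion.toComplL : (X ⊗[ℝ] Y) →L[ℝ] Completion (X ⊗[ℝ] Y)).comp (tmulRightL (x n))
  have hTfun : ∀ n, (fun y : Y => ((x n ⊗ₜ[ℝ] y : X ⊗[ℝ] Y) : Completion (X ⊗[ℝ] Y)))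
      = ⇑(T n) := fun n => rfl
  -- Part 1 : weak compactness of each slice
  have hcw : ∀ (T' : Y →L[ℝ] Completion (X ⊗[ℝ] Y)),
      IsCompact (toWeakSpace ℝ (Completion (X ⊗[ℝ] Y)) '' (⇑T' '' K)) := by
    intro T'
    have heq : toWeakSpace ℝ (Completion (X ⊗[ℝ] Y)) '' (⇑T' '' K)
        = ⇑(WeakSpace.map T') '' (toWeakSpace ℝ Y '' K) := by
      rw [Set.image_image, Set.image_image]
      rfl
    rw [heq]
    exact hK.image (WeakSpace.map T').continuous
  -- Part 2 : dense span
  have hdense : (Submodule.span ℝ (⋃ n : ℕ, ⇑(T n) '' K)).topologicalClosure = ⊤ := by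
    set M := (Submodule.span ℝ (⋃ n : ℕ, ⇑(T n) '' K)).topologicalClosure with hM
    have hMclosed : IsClosed (M : Set (Completion (X ⊗[ℝ] Y))) :=
      Submodule.isClosed_topologicalClosure _
    have hbase : ∀ n, ∀ k ∈ K, T n k ∈ M := fun n k hk =>
      Submodule.le_topologicalClosure _ (Submodule.subset_span
        (Set.mem_iUnion.mpr ⟨n, Set.mem_image_of_mem _ hk⟩))
    have step1 : ∀ n (y : Y), T n y ∈ M := by
      intro n
      have hNcl : IsClosed ((M.comap ((T n : Y →ₗ[ℝ] Completion (X ⊗[ℝ] Y))) : Submodule ℝ Y)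
          : Set Y) := hMclosed.preimage (T n).continuous
      have hle : Submodule.span ℝ K ≤ M.comap ((T n : Y →ₗ[ℝ] Completion (X ⊗[ℝ] Y))) :=
        Submodule.span_le.mpr fun k hk => hbase n k hk
      have hle2 : (Submodule.span ℝ K).topologicalClosure
          ≤ M.comap ((T n : Y →ₗ[ℝ] Completion (X ⊗[ℝ] Y))) :=
        Submodule.topologicalClosure_minimal _ hle hNcl
      intro y
      have hy : y ∈ (Submodule.span ℝ K).topologicalClosure := by
        rw [hKgen]; trivial
      exact hle2 hy
    have step2 : ∀ (z : X) (y : Y),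
        ((z ⊗ₜ[ℝ] y : X ⊗[ℝ] Y) : Completion (X ⊗[ℝ] Y)) ∈ M := by
      intro z y
      let S : X →L[ℝ] Completion (X ⊗[ℝ] Y) :=
        (Completion.toComplL : (X ⊗[ℝ] Y) →L[ℝ] Completion (X ⊗[ℝ] Y)).comp (tmulLeftL y)
      have hpre : IsClosed (⇑S ⁻¹' (M : Set (Completion (X ⊗[ℝ] Y)))) :=
        hMclosed.preimage S.continuous
      have hsub : Set.range x ⊆ ⇑S ⁻¹' (M : Set (Completion (X ⊗[ℝ] Y))) := by
        rintro - ⟨n, rfl⟩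
        exact step1 n y
      have hdense' : Dense (⇑S ⁻¹' (M : Set (Completion (X ⊗[ℝ] Y)))) :=
        Dense.mono hsub hx
      have huniv : (⇑S ⁻¹' (M : Set (Completion (X ⊗[ℝ] Y)))) = Set.univ := by
        rw [← hpre.closure_eq, hdense'.closure_eq]
      exact Set.eq_univ_iff_forall.mp huniv z
    have step3 : ∀ u : X ⊗[ℝ] Y, (u : Completion (X ⊗[ℝ] Y)) ∈ M := by
      intro u
      induction u using TensorProduct.induction_on with
      | zero => rw [Completion.coe_zero]; exact M.zero_mem
      | tmul z y => exact step2 z y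
      | add u v hu hv =>
          have : ((u + v : X ⊗[ℝ] Y) : Completion (X ⊗[ℝ] Y)) = ↑u + ↑v :=
            Completion.coe_add u v
          rw [this]; exact M.add_mem hu hv
    have hsub : Set.range ((↑) : X ⊗[ℝ] Y → Completion (X ⊗[ℝ] Y))
        ⊆ (M : Set (Completion (X ⊗[ℝ] Y))) := by
      rintro - ⟨u, rfl⟩; exact step3 u
    have hden : Dense (M : Set (Completion (X ⊗[ℝ] Y))) :=
      Dense.mono hsub Completion.denseRange_coe
    have hset : (M : Set (Completion (X ⊗[ℝ] Y))) = Set.univ := by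
      rw [← hMclosed.closure_eq, hden.closure_eq]
    exact Submodule.eq_top_iff'.mpr fun z => by
      have : z ∈ (M : Set (Completion (X ⊗[ℝ] Y))) := hset ▸ Set.mem_univ z
      exact this
  refine ⟨fun n => hcw (T n), hdense, ?_⟩
  -- Part 3 : a single weakly compact generating set
  obtain ⟨M0, hM0⟩ := exists_norm_le_of_weakSpace_compact K hK
  set M1 : ℝ := max M0 0 with hM1
  have hM1' : ∀ k ∈ K, ‖k‖ ≤ M1 := fun k hk => (hM0 k hk).trans (le_max_left _ _)
  set a : ℕ → ℝ := fun n => (1/2 : ℝ)^n * (1 + ‖x n‖)⁻¹ with ha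
  have hapos : ∀ n, 0 < a n := fun n =>
    mul_pos (pow_pos one_half_pos n) (inv_pos.mpr (by positivity))
  let U : ℕ → Y →L[ℝ] Completion (X ⊗[ℝ] Y) := fun n => a n • T n
  have hax : ∀ n, a n * ‖x n‖ ≤ (1/2 : ℝ)^n := by
    intro n
    have h1 : ‖x n‖ * (1 + ‖x n‖)⁻¹ ≤ 1 := by
      rw [← div_eq_mul_inv]
      exact div_le_one_of_le₀ (by linarith [norm_nonneg (x n)]) (by positivity)
    calc a n * ‖x n‖ = (1/2:ℝ)^n * (‖x n‖ * (1 + ‖x n‖)⁻¹) := by rw [ha]; ring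
      _ ≤ (1/2:ℝ)^n * 1 := by
          have : (0:ℝ) ≤ (1/2:ℝ)^n := by positivity
          nlinarith
      _ = (1/2:ℝ)^n := mul_one _
  have hbound : ∀ n, ∀ k ∈ K, ‖U n k‖ ≤ (1/2:ℝ)^n * M1 := by
    intro n k hk
    have hUnk : U n k = a n • ((x n ⊗ₜ[ℝ] k : X ⊗[ℝ] Y) : Completion (X ⊗[ℝ] Y)) := rfl
    have h0 : ‖U n k‖ = a n * ‖(x n ⊗ₜ[ℝ] k : X ⊗[ℝ] Y)‖ := by
      rw [hUnk, norm_smul, Completion.norm_coe, Real.norm_eq_abs, abs_of_pos (hapos n)]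
    rw [h0]
    calc a n * ‖(x n ⊗ₜ[ℝ] k : X ⊗[ℝ] Y)‖ ≤ a n * (‖x n‖ * ‖k‖) := by
          have := projNorm_tmul_le (x n) k
          have := (hapos n).le
          gcongr
      _ = (a n * ‖x n‖) * ‖k‖ := by ring
      _ ≤ (1/2:ℝ)^n * M1 := by
          have h1 := hax n
          have h2 := hM1' k hk
          have h3 : (0:ℝ) ≤ ‖k‖ := norm_nonneg k
          have h4 : (0:ℝ) ≤ a n * ‖x n‖ := mul_nonneg (hapos n).le (norm_nonneg _)
          nlinarith
  let g₀ : OnePoint ℕ × Y → Completion (X ⊗[ℝ] Y) :=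
    fun p => Option.elim p.1 0 (fun n => U n p.2)
  let gW : OnePoint ℕ × WeakSpace ℝ Y → WeakSpace ℝ (Completion (X ⊗[ℝ] Y)) :=
    fun p => Option.elim p.1 0 (fun n => WeakSpace.map (U n) p.2)
  have hKw : IsCompact ((Set.univ : Set (OnePoint ℕ)) ×ˢ (toWeakSpace ℝ Y '' K)) :=
    isCompact_univ.prod hK
  have hcontOn : ContinuousOn gW (Set.univ ×ˢ (toWeakSpace ℝ Y '' K)) := by
    rintro ⟨o, w⟩ hp
    cases o with
    | coe n =>
        apply ContinuousAt.continuousWithinAt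
        have hopen : IsOpen ({((n : ℕ) : OnePoint ℕ)} : Set (OnePoint ℕ)) := by
          simpa using OnePoint.isOpenMap_coe {n} (isOpen_discrete _)
        have hmem : {p : OnePoint ℕ × WeakSpace ℝ Y | p.1 = ((n : ℕ) : OnePoint ℕ)}
            ∈ 𝓝 (((n : ℕ) : OnePoint ℕ), w) :=
          IsOpen.mem_nhds (hopen.preimage continuous_fst) rfl
        have hcong : gW =ᶠ[𝓝 (((n : ℕ) : OnePoint ℕ), w)]
            (fun p : OnePoint ℕ × WeakSpace ℝ Y => WeakSpace.map (U n) p.2) := by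
          filter_upwards [hmem] with p hp1
          rcases p with ⟨o', w'⟩
          simp only [Set.mem_setOf_eq] at hp1
          subst hp1
          rfl
        exact (((WeakSpace.map (U n)).continuous.comp continuous_snd).continuousAt).congr
          hcong.symm
    | infty =>
        show ContinuousWithinAt gW (Set.univ ×ˢ (toWeakSpace ℝ Y '' K))
          ((OnePoint.infty : OnePoint ℕ), w)
        show Filter.Tendsto gW (nhdsWithin ((OnePoint.infty : OnePoint ℕ), w)
          (Set.univ ×ˢ (toWeakSpace ℝ Y '' K))) (nhds (gW ((OnePoint.infty : OnePoint ℕ), w)))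
        have h0 : gW ((OnePoint.infty : OnePoint ℕ), w) = 0 := rfl
        rw [h0]
        apply tendsto_weakSpace
        intro φ
        rw [map_zero, map_zero]
        apply squeeze_zero_norm'
          (a := fun p : OnePoint ℕ × WeakSpace ℝ Y =>
            Option.elim p.1 0 (fun n => (1/2:ℝ)^n * (‖φ‖ * M1)))
        · filter_upwards [self_mem_nhdsWithin] with p hp
          rcases p with ⟨o, w'⟩
          have hw' : w' ∈ toWeakSpace ℝ Y '' K := hp.2
          obtain ⟨k, hkK, rfl⟩ := hw'
          cases o with
          | infty =>
              show |φ ((toWeakSpace ℝ (Completion (X ⊗[ℝ] Y))).symm 0)| ≤ (0:ℝ)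
              simp
          | coe n =>
              show ‖φ (U n k)‖ ≤ (1/2:ℝ)^n * (‖φ‖ * M1)
              calc ‖φ (U n k)‖ ≤ ‖φ‖ * ‖U n k‖ := φ.le_opNorm _
                _ ≤ ‖φ‖ * ((1/2:ℝ)^n * M1) := by
                    have := hbound n k hkK
                    gcongr
                _ = (1/2:ℝ)^n * (‖φ‖ * M1) := by ring
        · have h1 : Filter.Tendsto
              (fun o : OnePoint ℕ => Option.elim o 0 (fun n => (1/2:ℝ)^n * (‖φ‖ * M1)))
              (nhds (OnePoint.infty : OnePoint ℕ)) (nhds (0:ℝ)) := by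
            rw [OnePoint.tendsto_nhds_infty']
            constructor
            · exact tendsto_pure_nhds
                (fun o : OnePoint ℕ => Option.elim o 0 (fun n => (1/2:ℝ)^n * (‖φ‖ * M1)))
                (OnePoint.infty : OnePoint ℕ)
            · rw [Filter.coclosedCompact_eq_cocompact, cocompact_eq_atTop (α := ℕ)]
              refine Tendsto.congr (f₁ := fun n : ℕ => (1/2:ℝ)^n * (‖φ‖ * M1)) (fun n => rfl) ?_
              simpa only [zero_mul] using
                ((tendsto_pow_atTop_nhds_zero_of_lt_one (by norm_num : (0:ℝ) ≤ 1/2)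
                  (by norm_num : (1/2:ℝ) < 1)).mul_const (‖φ‖ * M1))
          exact h1.comp ((continuous_fst.tendsto _).mono_left nhdsWithin_le_nhds)
  have hGcomp : IsCompact (gW '' (Set.univ ×ˢ (toWeakSpace ℝ Y '' K))) :=
    hKw.image_of_continuousOn hcontOn
  refine ⟨(toWeakSpace ℝ (Completion (X ⊗[ℝ] Y))).symm ''
      (gW '' (Set.univ ×ˢ (toWeakSpace ℝ Y '' K))), ?_, ?_⟩
  · have himg : toWeakSpace ℝ (Completion (X ⊗[ℝ] Y)) ''
        ((toWeakSpace ℝ (Completion (X ⊗[ℝ] Y))).symm ''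
          (gW '' (Set.univ ×ˢ (toWeakSpace ℝ Y '' K))))
        = gW '' (Set.univ ×ˢ (toWeakSpace ℝ Y '' K)) := by
      rw [Set.image_image]
      simp only [LinearEquiv.apply_symm_apply, Set.image_id']
    rw [himg]
    exact hGcomp
  · have hmemG : ∀ n, ∀ k ∈ K, U n k ∈ (toWeakSpace ℝ (Completion (X ⊗[ℝ] Y))).symm ''
        (gW '' (Set.univ ×ˢ (toWeakSpace ℝ Y '' K))) := by
      intro n k hk
      refine ⟨gW (((n:ℕ) : OnePoint ℕ), toWeakSpace ℝ Y k), ?_, ?_⟩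
      · exact Set.mem_image_of_mem gW
          (Set.mem_prod.mpr ⟨Set.mem_univ _, Set.mem_image_of_mem _ hk⟩)
      · exact toWeakSpace_symm_map (U n) k
    have hsub : Submodule.span ℝ (⋃ n : ℕ, ⇑(T n) '' K)
        ≤ Submodule.span ℝ ((toWeakSpace ℝ (Completion (X ⊗[ℝ] Y))).symm ''
          (gW '' (Set.univ ×ˢ (toWeakSpace ℝ Y '' K)))) := by
      rw [Submodule.span_le]
      intro u hu
      simp only [Set.mem_iUnion, Set.mem_image] at hu
      obtain ⟨n, k, hk, rfl⟩ := hu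
      have h1 : U n k ∈ Submodule.span ℝ ((toWeakSpace ℝ (Completion (X ⊗[ℝ] Y))).symm ''
          (gW '' (Set.univ ×ˢ (toWeakSpace ℝ Y '' K)))) :=
        Submodule.subset_span (hmemG n k hk)
      have h2 : T n k = (a n)⁻¹ • (U n k) := by
        have hU : U n k = a n • T n k := rfl
        rw [hU, smul_smul, inv_mul_cancel₀ (hapos n).ne', one_smul]
      rw [h2]
      exact Submodule.smul_mem _ _ h1
    exact eq_top_iff.mpr (hdense ▸ Submodule.topologicalClosure_mono hsub)
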